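/- arXiv:0805.3449 — 2 statements merged into one kernel-verified Lean document; each statement's English description precedes it below -/
import Mathlib

section
/- Let N be an additive commutative group (ℤ-module), let k_1, …, k_r be integers with r ≥ 1, and let u_0, u_1, …, u_r ∈ N satisfy u_0 + u_2 = (k_1 − 1)·u_1 and u_{j-1} + u_{j+1} = k_j·u_j for all 2 ≤ j ≤ r−1. Set u_{r+1} := −(u_0 + u_1). Then for every 1 ≤ j ≤ r one has u_j = Z_{j-1}(k_1, …, k_{j-1})·u_1 + Z_{j-2}(k_2, …, k_{j-1})·u_{r+1}. -/
/-- Auxiliary: continuant computed from the *front* of the list; applied to the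
reversed list it gives the continuant of the paper. -/
def Zrev {R : Type*} [CommRing R] : List R → R
  | [] => 1
  | [x] => x
  | x :: y :: l => x * Zrev (y :: l) - Zrev l

/-- The continuant polynomial `Z_n(x_1,…,x_n)` (with `Z_{-1}=0`, `Z_0=1`) satisfying
`Z_n(x_1,…,x_n) = x_n·Z_{n-1}(x_1,…,x_{n-1}) - Z_{n-2}(x_1,…,x_{n-2})`. -/
def Zc {R : Type*} [CommRing R] (l : List R) : R := Zrev l.reverse

/-- The Hirzebruch–Jung continued fraction `[x_1,…,x_n] = x_1 - 1/[x_2,…,x_n]`. -/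
noncomputable def hj {K : Type*} [Field K] : List K → K
  | [] => 0
  | [x] => x
  | x :: y :: l => x - 1 / hj (y :: l)

/-- The `n×n` tridiagonal matrix `M(x_1,…,x_n)` with diagonal entries `x_i`,
entries `-1` immediately above and below the diagonal, `0` elsewhere. -/
def triMat {n : ℕ} {R : Type*} [CommRing R] (x : Fin n → R) :
    Matrix (Fin n) (Fin n) R :=
  Matrix.of fun i j =>
    if i = j then x i
    else if (i : ℕ) + 1 = (j : ℕ) ∨ (j : ℕ) + 1 = (i : ℕ) then -1 else 0

/-- A tuple `x ∈ ℕ^n` is admissible if `M(x)` is positive semidefinite of rank `≥ n-1`. -/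
def Admissible {n : ℕ} (x : Fin n → ℕ) : Prop :=
  (triMat fun i => (x i : ℝ)).PosSemidef ∧ n - 1 ≤ (triMat fun i => (x i : ℝ)).rank

lemma Zc_concat {R : Type*} [CommRing R] {l : List R} (hl : l ≠ []) (x : R) :
    Zc (l ++ [x]) = x * Zc l - Zc l.dropLast := by
  obtain ⟨y, l', h⟩ := List.exists_cons_of_ne_nil (by simpa using hl : l.reverse ≠ [])
  have hl2 : l = l'.reverse ++ [y] := by
    rw [← List.reverse_cons, ← h, List.reverse_reverse]
  rw [hl2, List.dropLast_concat]
  simp only [Zc, List.reverse_append, List.reverse_cons, List.reverse_nil,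
    List.nil_append, List.reverse_reverse, List.cons_append, List.singleton_append]
  rfl

lemma Zc_rec (k : ℕ → ℤ) (s m : ℕ) :
    Zc ((List.range' s (m + 2)).map k) =
      k (s + m + 1) * Zc ((List.range' s (m + 1)).map k) -
        Zc ((List.range' s m).map k) := by
  rw [List.range'_concat (s := s) (n := m+1), List.map_append, List.map_singleton,
    Zc_concat (by simp) _]
  congr 2
  · ring_nf
  · rw [List.range'_concat, List.map_append, List.map_singleton, List.dropLast_concat]

/-- if `u_0 + u_2 = (k_1-1)u_1`, `u_{j-1} + u_{j+1} = k_j u_j` for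
`2 ≤ j ≤ r-1` and `u_{r+1} = -(u_0 + u_1)`, then
`u_j = Z_{j-1}(k_1,…,k_{j-1})·u_1 + Z_{j-2}(k_2,…,k_{j-1})·u_{r+1}` for `1 ≤ j ≤ r`. -/
theorem u_eq_Zc_smul {N : Type*} [AddCommGroup N] (r : ℕ) (hr : 1 ≤ r)
    (k : ℕ → ℤ) (u : ℕ → N)
    (h1 : u 0 + u 2 = (k 1 - 1) • u 1)
    (hmid : ∀ j, 2 ≤ j → j ≤ r - 1 → u (j - 1) + u (j + 1) = k j • u j)
    (hlast : u (r + 1) = -(u 0 + u 1)) :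
    ∀ j, 1 ≤ j → j ≤ r →
      u j = Zc ((List.range' 1 (j - 1)).map k) • u 1 +
        (if j = 1 then (0 : ℤ) else Zc ((List.range' 2 (j - 2)).map k)) • u (r + 1) := by
  intro j
  induction j using Nat.strong_induction_on with
  | _ j ih =>
    intro hj1 hjr
    rcases j with _ | _ | _ | _ | m
    · omega
    · simp [Zc, Zrev]
    · -- j = 2
      have h0 : u 0 = -u (r+1) - u 1 := by rw [hlast]; abel
      have e : u 2 = (k 1 - 1) • u 1 - u 0 := by rw [← h1]; abel
      have h2 : u 2 = k 1 • u 1 + (1:ℤ) • u (r+1) := by rw [e, h0]; module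
      simpa [Zc, Zrev, List.range'] using h2
    · -- j = 3
      have e2 := ih 2 (by omega) (by omega) (by omega)
      rw [if_neg (by omega)] at e2
      have hm := hmid 2 (by omega) (by omega)
      norm_num at hm
      have e3 : u 3 = k 2 • u 2 - u 1 := by rw [← hm]; abel
      rw [if_neg (by omega), e3, e2]
      rw [show List.range' 1 2 = [1, 2] from rfl, show List.range' 2 1 = [2] from rfl,
        show List.range' 1 1 = [1] from rfl, show List.range' 2 0 = ([] : List ℕ) from rfl]
      simp only [List.map_cons, List.map_nil]
      rw [show Zc [k 1, k 2] = k 2 * k 1 - 1 from rfl, show Zc [k 2] = k 2 from rfl,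
        show Zc [k 1] = k 1 from rfl, show Zc ([] : List ℤ) = 1 from rfl]
      module
    · -- j = m + 4
      have e1 := ih (m+3) (by omega) (by omega) (by omega)
      have e2 := ih (m+2) (by omega) (by omega) (by omega)
      rw [if_neg (by omega)] at e1
      rw [if_neg (by omega)] at e2
      simp only [show m+3-1 = m+2 by omega, show m+3-2 = m+1 by omega,
        show m+2-1 = m+1 by omega, show m+2-2 = m by omega] at e1 e2
      have hm := hmid (m+3) (by omega) (by omega)
      simp only [show m+3-1 = m+2 by omega, show m+3+1 = m+4 by omega] at hm
      have e3 : u (m+4) = k (m+3) • u (m+3) - u (m+2) := by rw [← hm]; abel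
      have hA := Zc_rec k 1 (m+1)
      have hB := Zc_rec k 2 m
      simp only [show 1+(m+1)+1 = m+3 by omega, show 2+m+1 = m+3 by omega] at hA hB
      rw [if_neg (by omega), show m+4-1 = m+3 by omega, show m+4-2 = m+2 by omega,
        show m+3 = (m+1)+2 by omega, hA, show m+2 = m + 2 from rfl, hB, e3, e1, e2]
      module
end

section
/- Let a = (a_1, …, a_r) with all a_i ≥ 2 integers, let k = (k_1, …, k_r) ∈ ℕ^r be admissible with Z_r(k_1, …, k_r) = 0 and k_i ≤ a_i for all i, and fix t ∈ ℂ. Let P_0 = 1, P_1 = z_1, and P_2, …, P_{r+1} ∈ ℂ[z_0, z_1] be the polynomials determined by the recursion P_{i-1}·P_{i+1} = P_i^{a_i} + t·P_i^{k_i}·z_0^{(a_i − k_i)·Z_{i-2}(a_2, …, a_{i-1})}. For each j choose complex numbers ξ_{j,1}, …, ξ_{j,a_j−k_j} such that ∏_{ℓ=1}^{a_j−k_j}(X + ξ_{j,ℓ}) = X^{a_j−k_j} + t in ℂ[X]. Then P_{r+1} = ∏_{j=1}^{r} ∏_{ℓ=1}^{a_j−k_j} ( P_j + ξ_{j,ℓ}·z_0^{Z_{j-2}(a_2,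 …, a_{j-1})} )^{Z_{j-1}(k_1, …, k_{j-1})}. -/
/- ===== auxiliary lemmas ===== -/

variable {R : Type*} [CommRing R]


lemma Zrev_append_pair : ∀ (l : List R) (y x : R),
    Zrev (l ++ [y, x]) = x * Zrev (l ++ [y]) - Zrev l := by
  intro l
  induction l using Zrev.induct with
  | case1 => intro y x; simp [Zrev]; ring
  | case2 z => intro y x; simp [Zrev]; ring
  | case3 z w l ih1 ih2 =>
      intro y x
      show Zrev (z :: w :: (l ++ [y, x])) = _
      rw [Zrev, show w :: (l ++ [y, x]) = (w :: l) ++ [y, x] from rfl, ih1, ih2]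
      rw [show Zrev (z :: w :: l ++ [y]) = Zrev (z :: w :: (l ++ [y])) from rfl]
      rw [show Zrev (z :: w :: (l ++ [y])) = z * Zrev (w :: (l ++ [y])) - Zrev (l ++ [y]) from rfl]
      rw [show (w :: l) ++ [y] = w :: (l ++ [y]) from rfl, Zrev]
      ring

lemma Zrev_reverse : ∀ l : List R, Zrev l.reverse = Zrev l := by
  intro l
  induction l using Zrev.induct with
  | case1 => rfl
  | case2 => rfl
  | case3 x y l ih1 ih2 =>
      have : (x :: y :: l).reverse = l.reverse ++ [y, x] := by simp
      rw [this, Zrev_append_pair, Zrev]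
      have : l.reverse ++ [y] = (y :: l).reverse := by simp
      rw [this, ih1, ih2]

lemma Zc_eq_Zrev (l : List R) : Zc l = Zrev l := Zrev_reverse l

lemma Zc_cons_cons (x y : R) (l : List R) :
    Zc (x :: y :: l) = x * Zc (y :: l) - Zc l := by
  simp only [Zc_eq_Zrev]; rfl

lemma Zc_concat_concat (l : List R) (y x : R) :
    Zc (l ++ [y, x]) = x * Zc (l ++ [y]) - Zc l := by
  simp only [Zc, List.reverse_append]
  show Zrev (x :: y :: l.reverse) = x * Zrev (y :: l.reverse) - Zrev l.reverse
  · rfl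

lemma map_Zrev {S : Type*} [CommRing S] (f : R →+* S) : ∀ l : List R,
    Zrev (l.map f) = f (Zrev l) := by
  intro l
  induction l using Zrev.induct with
  | case1 => simp [Zrev]
  | case2 x => simp [Zrev]
  | case3 x y l ih1 ih2 =>
      show Zrev (f x :: f y :: l.map f) = _
      rw [Zrev, show (f y :: l.map f) = (y :: l).map f from rfl, ih1, ih2, Zrev]
      simp

lemma isCoprime_Zrev_cons : ∀ (l : List ℤ) (x : ℤ), IsCoprime (Zrev (x :: l)) (Zrev l) := by
  intro l
  induction l using Zrev.induct with
  | case1 => intro x; simpa [Zrev] using isCoprime_one_right (x := x)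
  | case2 y =>
      intro x
      show IsCoprime (x * y - 1) y
      have : IsCoprime (-1 : ℤ) y := (isCoprime_one_left (x := y)).neg_left
      simpa [mul_comm, sub_eq_neg_add, add_comm] using this.add_mul_right_left x
  | case3 y z l ih1 ih2 =>
      intro x
      show IsCoprime (x * Zrev (y :: z :: l) - Zrev (z :: l)) (Zrev (y :: z :: l))
      have h : IsCoprime (-Zrev (z :: l)) (Zrev (y :: z :: l)) :=
        ((ih1 y).symm).neg_left
      have := h.add_mul_right_left x
      convert this using 1
      · rfl
      · ring

/-- continuant of `g (j+1), …, g i`. -/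
def cc (g : ℕ → ℤ) (j i : ℕ) : ℤ := Zc ((List.range' (j+1) (i - j)).map g)

lemma isCoprime_Zc_cons (x : ℤ) (l : List ℤ) : IsCoprime (Zc (x :: l)) (Zc l) := by
  simp only [Zc_eq_Zrev]; exact isCoprime_Zrev_cons l x

lemma isCoprime_Zc_concat (l : List ℤ) (x : ℤ) : IsCoprime (Zc (l ++ [x])) (Zc l) := by
  simp only [Zc, List.reverse_append]
  exact isCoprime_Zrev_cons l.reverse x

variable (g : ℕ → ℤ)

lemma cc_self (j : ℕ) : cc g j j = 1 := by simp [cc, Zc, Zrev]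

lemma cc_succ_self (j : ℕ) : cc g j (j+1) = g (j+1) := by
  simp [cc, List.range'_one, Zc, Zrev]

lemma range'_split' (j i : ℕ) (h : j + 1 ≤ i) :
    List.range' (j+1) (i - j) = List.range' (j+1) (i - 1 - j) ++ [i] := by
  have h1 : i - j = (i - 1 - j) + 1 := by omega
  rw [h1, List.range'_concat]
  congr 2
  omega

lemma cc_rec_back (j i : ℕ) (h : j + 2 ≤ i) :
    cc g j i = g i * cc g j (i-1) - cc g j (i-2) := by
  unfold cc
  rw [range'_split' j i (by omega), range'_split' j (i-1) (by omega)]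
  have h2 : i - 1 - 1 - j = i - 2 - j := by omega
  rw [h2, List.map_append, List.map_append, List.append_assoc]
  simp only [List.map_cons, List.map_nil, List.singleton_append]
  rw [Zc_concat_concat]

lemma cc_rec_front (j i : ℕ) (h : j + 2 ≤ i) :
    cc g j i = g (j+1) * cc g (j+1) i - cc g (j+2) i := by
  unfold cc
  rw [show i - j = (i - (j+1)) + 1 by omega, List.range'_succ,
    show i - (j+1) = (i - (j+2)) + 1 by omega, List.range'_succ]
  simp only [List.map_cons]
  rw [Zc_cons_cons]

lemma cc_coprime_back (j i : ℕ) (h : j + 1 ≤ i) :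
    IsCoprime (cc g j i) (cc g j (i-1)) := by
  unfold cc
  rw [range'_split' j i h, List.map_append]
  exact isCoprime_Zc_concat _ _

lemma cc_coprime_front (j i : ℕ) (h : j + 1 ≤ i) :
    IsCoprime (cc g j i) (cc g (j+1) i) := by
  unfold cc
  rw [show i - j = (i - (j+1)) + 1 by omega, List.range'_succ, List.map_cons]
  rw [show j + 1 + 1 = j + 2 by ring]
  exact isCoprime_Zc_cons _ _

lemma cc_split (j : ℕ) (hj : 1 ≤ j) : ∀ i, j + 1 ≤ i →
    cc g 0 i = cc g 0 j * cc g j i - cc g 0 (j-1) * cc g (j+1) i := by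
  intro i
  induction i using Nat.strong_induction_on with
  | _ i IH =>
    intro hi
    rcases (by omega : i = j+1 ∨ i = j+2 ∨ j+3 ≤ i) with h|h|h
    · subst h
      rw [cc_rec_back g 0 (j+1) (by omega), cc_succ_self, cc_self,
        show j+1-1 = j from by omega, show j+1-2 = j-1 from by omega,
        ]
      ring
    · subst h
      rw [cc_rec_back g 0 (j+2) (by omega), cc_rec_back g j (j+2) (by omega)]
      simp only [show j+2-1 = j+1 from by omega, show j+2-2 = j from by omega]
      rw [cc_rec_back g 0 (j+1) (by omega)]
      simp only [show j+1-1 = j from by omega, show j+1-2 = j-1 from by omega]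
      rw [cc_self, show cc g (j+1) (j+2) = g (j+2) from cc_succ_self g (j+1),
        show cc g j (j+1) = g (j+1) from cc_succ_self g j]
      ring
    · rw [cc_rec_back g 0 i (by omega), cc_rec_back g j i (by omega),
        cc_rec_back g (j+1) i (by omega),
        IH (i-1) (by omega) (by omega), IH (i-2) (by omega) (by omega)]
      ring

lemma cc_end (r : ℕ) (hr : 1 ≤ r) (h0 : cc g 0 r = 0)
    (hnn : ∀ j i, j ≤ i → i ≤ r → 0 ≤ cc g j i) :
    ∀ j, 1 ≤ j → j ≤ r → cc g j r = cc g 0 (j-1) := by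
  intro j hj hjr
  rcases Nat.eq_or_lt_of_le hjr with heq | hlt
  · -- j = r
    subst heq
    rw [cc_self]
    rcases Nat.eq_or_lt_of_le hj with heq1 | hr2
    · rw [← heq1]; simp [cc_self]
    · have hrec := cc_rec_back g 0 j (by omega)
      rw [h0] at hrec
      have hdvd : cc g 0 (j-1) ∣ cc g 0 (j-2) := ⟨g j, by linarith⟩
      have hcop : IsCoprime (cc g 0 (j-1)) (cc g 0 (j-1-1)) :=
        cc_coprime_back g 0 (j-1) (by omega)
      rw [show j-1-1 = j-2 from by omega] at hcop
      have hu : IsUnit (cc g 0 (j-1)) := hcop.isUnit_of_dvd' dvd_rfl hdvd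
      rcases Int.isUnit_iff.mp hu with h1 | h1
      · omega
      · have := hnn 0 (j-1) (by omega) (by omega); omega
  · -- j < r
    have hid := cc_split g j hj r (by omega)
    rw [h0] at hid
    have heq : cc g 0 j * cc g j r = cc g 0 (j-1) * cc g (j+1) r := by linarith
    have hd1 : cc g 0 (j-1) ∣ cc g j r := by
      have hcop : IsCoprime (cc g 0 (j-1)) (cc g 0 j) := by
        have h := cc_coprime_back g 0 j (by omega)
        rw [show j - 1 = j - 1 from rfl] at h
        exact h.symm
      exact hcop.dvd_of_dvd_mul_left ⟨cc g (j+1) r, heq⟩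
    have hd2 : cc g j r ∣ cc g 0 (j-1) := by
      have hcop : IsCoprime (cc g j r) (cc g (j+1) r) := cc_coprime_front g j r (by omega)
      exact hcop.dvd_of_dvd_mul_right ⟨cc g 0 j, by linarith [mul_comm (cc g 0 j) (cc g j r)]⟩
    exact Int.dvd_antisymm (hnn j r (by omega) (by omega))
      (hnn 0 (j-1) (by omega) (by omega)) hd2 hd1


lemma triMat_apply {n : ℕ} (x : Fin n → R) (i j : Fin n) :
    triMat x i j = if (i:ℕ) = (j:ℕ) then x i
      else if (i : ℕ) + 1 = (j : ℕ) ∨ (j : ℕ) + 1 = (i : ℕ) then -1 else 0 := by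
  simp [triMat, Fin.ext_iff]

lemma det_triMat : ∀ (n : ℕ) (x : Fin n → R), (triMat x).det = Zrev (List.ofFn x) := by
  intro n
  induction n using Nat.strong_induction_on with
  | _ n IH =>
    match n with
    | 0 => intro x; simp [Zrev, Matrix.det_isEmpty]
    | 1 => intro x; simp [Matrix.det_fin_one, triMat, Zrev]
    | (m+2) =>
      intro x
      rw [Matrix.det_succ_row_zero]
      rw [Fin.sum_univ_succ, Fin.sum_univ_succ]
      have hzero : ∀ j : Fin m,
          (-1 : R) ^ ((j.succ.succ : Fin (m+2)) : ℕ) * triMat x 0 j.succ.succ *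
            ((triMat x).submatrix Fin.succ (j.succ.succ).succAbove).det = 0 := by
        intro j
        have : triMat x 0 j.succ.succ = 0 := by
          rw [triMat_apply]
          have : ((j.succ.succ : Fin (m+2)) : ℕ) = (j : ℕ) + 2 := by simp
          rw [this]
          norm_num
        rw [this]; ring
      rw [Finset.sum_eq_zero fun j _ => hzero j, add_zero]
      -- j = 0 term
      have h00 : triMat x 0 0 = x 0 := by rw [triMat_apply]; simp
      have hsub0 : (triMat x).submatrix Fin.succ ((0 : Fin (m+2)).succAbove)
          = triMat (x ∘ Fin.succ) := by
        rw [Fin.succAbove_zero]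
        ext i j
        simp only [Matrix.submatrix_apply, triMat_apply, Function.comp_apply, Fin.val_succ]
        by_cases h1 : (i:ℕ) = (j:ℕ)
        · simp [h1]
        · have : ¬ ((i:ℕ)+1 = (j:ℕ)+1) := by omega
          simp only [this, h1, if_false]
          by_cases h2 : (i:ℕ)+1 = (j:ℕ) ∨ (j:ℕ)+1 = (i:ℕ)
          · have h3 : ((i:ℕ)+1+1 = (j:ℕ)+1 ∨ (j:ℕ)+1+1 = (i:ℕ)+1) := by omega
            simp [h2, h3]
          · have h3 : ¬((i:ℕ)+1+1 = (j:ℕ)+1 ∨ (j:ℕ)+1+1 = (i:ℕ)+1) := by omega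
            simp [h2, h3]
      -- j = 1 term
      have h01 : triMat x 0 1 = -1 := by
        rw [triMat_apply]
        have hv : ((1 : Fin (m+2)) : ℕ) = 1 := rfl
        rw [hv]; norm_num
      have hsA0 : (1 : Fin (m+2)).succAbove 0 = 0 := by
        rw [Fin.succAbove]
        simp [Fin.lt_iff_val_lt_val]
      have hsAsucc : ∀ i : Fin m, (1 : Fin (m+2)).succAbove i.succ = i.succ.succ := by
        intro i
        rw [Fin.succAbove]
        have : ¬ ((i.succ.castSucc : Fin (m+2)) < 1) := by
          simp [Fin.lt_iff_val_lt_val]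
        simp [this]
      have hB : ((triMat x).submatrix Fin.succ ((1 : Fin (m+2)).succAbove)).det
          = - (triMat (x ∘ Fin.succ ∘ Fin.succ)).det := by
        rw [Matrix.det_succ_column_zero]
        rw [Fin.sum_univ_succ]
        have hz2 : ∀ i : Fin m,
            (-1:R) ^ ((i.succ : Fin (m+1)) : ℕ) *
              (triMat x).submatrix Fin.succ ((1 : Fin (m+2)).succAbove) i.succ 0 *
              (((triMat x).submatrix Fin.succ ((1 : Fin (m+2)).succAbove)).submatrix
                i.succ.succAbove Fin.succ).det = 0 := by
          intro i
          have hent : (triMat x).submatrix Fin.succ ((1 : Fin (m+2)).succAbove) i.succ 0 = 0 := by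
            simp only [Matrix.submatrix_apply, hsA0]
            rw [triMat_apply]
            have h1 : ((i.succ.succ : Fin (m+2)) : ℕ) = (i:ℕ) + 2 := by simp
            have h2 : ((0 : Fin (m+2)) : ℕ) = 0 := rfl
            rw [h1, h2, if_neg (by omega), if_neg (by omega)]
          rw [hent]; ring
        rw [Finset.sum_eq_zero fun i _ => hz2 i, add_zero]
        have hent0 : (triMat x).submatrix Fin.succ ((1 : Fin (m+2)).succAbove) 0 0 = -1 := by
          simp only [Matrix.submatrix_apply, hsA0]
          rw [triMat_apply]
          have h1 : ((Fin.succ 0 : Fin (m+2)) : ℕ) = 1 := by simp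
          have h2 : ((0 : Fin (m+2)) : ℕ) = 0 := rfl
          rw [h1, h2, if_neg (by omega), if_pos (by omega)]
        rw [hent0]
        have hCC : ((triMat x).submatrix Fin.succ ((1 : Fin (m+2)).succAbove)).submatrix
            (0 : Fin (m+1)).succAbove Fin.succ = triMat (x ∘ Fin.succ ∘ Fin.succ) := by
          rw [Fin.succAbove_zero]
          ext i j
          simp only [Matrix.submatrix_apply, Matrix.submatrix_submatrix, Function.comp_apply,
            hsAsucc]
          rw [triMat_apply, triMat_apply]
          have h1 : ((i.succ.succ : Fin (m+2)) : ℕ) = (i:ℕ) + 2 := by simp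
          have h2 : ((j.succ.succ : Fin (m+2)) : ℕ) = (j:ℕ) + 2 := by simp
          rw [h1, h2]
          by_cases e1 : (i:ℕ) = (j:ℕ)
          · rw [if_pos (by omega), if_pos e1]; rfl
          · rw [if_neg (by omega), if_neg e1]
            by_cases e2 : (i:ℕ)+1 = (j:ℕ) ∨ (j:ℕ)+1 = (i:ℕ)
            · rw [if_pos (by omega), if_pos e2]
            · rw [if_neg (by omega), if_neg e2]
        rw [hCC]
        simp
      simp only [Fin.succ_zero_eq_one, Fin.val_zero, pow_zero, one_mul]
      rw [h00, h01, hsub0, hB, IH (m+1) (by omega), IH m (by omega)]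
      rw [show (List.ofFn x) = x 0 :: List.ofFn (x ∘ Fin.succ) from by
        rw [List.ofFn_succ]; rfl]
      rw [show (List.ofFn (x ∘ Fin.succ))
          = (x ∘ Fin.succ) 0 :: List.ofFn (x ∘ Fin.succ ∘ Fin.succ) from by
        rw [List.ofFn_succ]; rfl]
      rw [show Zrev (x 0 :: (x ∘ Fin.succ) 0 :: List.ofFn (x ∘ Fin.succ ∘ Fin.succ))
          = x 0 * Zrev ((x ∘ Fin.succ) 0 :: List.ofFn (x ∘ Fin.succ ∘ Fin.succ))
            - Zrev (List.ofFn (x ∘ Fin.succ ∘ Fin.succ)) from rfl]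
      rw [show ((1 : Fin (m+2)) : ℕ) = 1 from rfl]
      ring

lemma psd_det_nonneg {n : ℕ} {A : Matrix (Fin n) (Fin n) ℝ} (hA : A.PosSemidef) :
    0 ≤ A.det := by
  rw [hA.isHermitian.det_eq_prod_eigenvalues]
  exact Finset.prod_nonneg fun i _ => by simpa using hA.eigenvalues_nonneg i

lemma ofFn_shift {α : Type*} : ∀ (n s : ℕ) (f : ℕ → α),
    List.ofFn (fun i : Fin n => f (s + i)) = (List.range' s n).map f := by
  intro n
  induction n with
  | zero => intro s f; simp
  | succ n ih =>
      intro s f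
      rw [List.range'_succ, List.ofFn_succ, List.map_cons]
      have h1 : (fun i : Fin n => f (s + ↑(Fin.succ i))) = fun i : Fin n => f ((s+1) + ↑i) := by
        funext i
        congr 1
        simp only [Fin.val_succ]
        omega
      rw [h1, ih (s+1) f]
      simp

lemma zrev_cast_nonneg (l : List ℤ) (h : 0 ≤ Zrev (l.map (fun z : ℤ => (z : ℝ)))) :
    0 ≤ Zrev l := by
  have := map_Zrev (Int.castRingHom ℝ) l
  rw [show (l.map fun z : ℤ => (z:ℝ)) = l.map (Int.castRingHom ℝ) from rfl, this] at h
  have h2 : (0:ℝ) ≤ ((Zrev l : ℤ) : ℝ) := h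
  exact_mod_cast h2

lemma cc_nonneg (r : ℕ) (k : ℕ → ℕ)
    (hadm : (triMat fun i : Fin r => (k (i.1 + 1) : ℝ)).PosSemidef) :
    ∀ j i, j ≤ i → i ≤ r → 0 ≤ cc (fun m => (k m : ℤ)) j i := by
  intro j i hji hir
  have hm : ∀ s : Fin (i - j), j + s < r := fun s => by omega
  set e : Fin (i-j) → Fin r := fun s => ⟨j + s, hm s⟩ with he
  have hsub : ((triMat fun i : Fin r => (k (i.1+1) : ℝ)).submatrix e e)
      = triMat (fun s : Fin (i-j) => (k (j + 1 + s) : ℝ)) := by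
    ext s u
    simp only [Matrix.submatrix_apply, triMat_apply, he]
    by_cases h1 : (s:ℕ) = (u:ℕ)
    · rw [if_pos (by omega), if_pos h1,
        show j + (s:ℕ) + 1 = j + 1 + (s:ℕ) from by omega]
    · rw [if_neg (by omega), if_neg h1]
      by_cases h2 : (s:ℕ)+1 = (u:ℕ) ∨ (u:ℕ)+1 = (s:ℕ)
      · rw [if_pos (by omega), if_pos h2]
      · rw [if_neg (by omega), if_neg h2]
  have hpsd := hadm.submatrix e
  rw [hsub] at hpsd
  have hdet := psd_det_nonneg hpsd
  rw [det_triMat] at hdet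
  unfold cc
  rw [Zc_eq_Zrev]
  apply zrev_cast_nonneg
  rw [List.map_map]
  rw [show ((fun z : ℤ => (z:ℝ)) ∘ fun m => (k m : ℤ)) = fun m => (k m : ℝ) from by
    funext m; simp]
  rw [← ofFn_shift (i-j) (j+1) (fun m => (k m : ℝ))]
  simpa using hdet

open Polynomial in
lemma xi_prod {S : Type*} [CommRing S] [IsDomain S] [Algebra ℂ S]
    (t : ℂ) (n : ℕ) (ξ : ℕ → ℂ)
    (hξ : ∏ ℓ ∈ Finset.Icc 1 n, (Polynomial.X + Polynomial.C (ξ ℓ))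
      = Polynomial.X ^ n + Polynomial.C t)
    (u v : S) (hv : v ≠ 0) :
    ∏ ℓ ∈ Finset.Icc 1 n, (u + algebraMap ℂ S (ξ ℓ) * v)
      = u ^ n + algebraMap ℂ S t * v ^ n := by
  set K := FractionRing S
  have hinj : Function.Injective (algebraMap S K) := IsFractionRing.injective S K
  apply hinj
  set φ : ℂ →+* K := (algebraMap S K).comp (algebraMap ℂ S) with hφ
  set fu := algebraMap S K u with hfu
  set fv := algebraMap S K v with hfv
  have hfv0 : fv ≠ 0 := fun h => hv (hinj (by rw [map_zero]; exact h))
  set y : K := fu / fv with hy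
  have h1 : ∏ ℓ ∈ Finset.Icc 1 n, (y + φ (ξ ℓ)) = y ^ n + φ t := by
    have h := congrArg (Polynomial.eval₂RingHom φ y) hξ
    simpa using h
  have hmul : ∀ ℓ : ℕ, fv * (y + φ (ξ ℓ)) = fu + φ (ξ ℓ) * fv := by
    intro ℓ
    rw [mul_add, hy, mul_div_cancel₀ _ hfv0]
    ring
  have h2 : ∏ ℓ ∈ Finset.Icc 1 n, (fu + φ (ξ ℓ) * fv)
      = fu ^ n + φ t * fv ^ n := by
    calc ∏ ℓ ∈ Finset.Icc 1 n, (fu + φ (ξ ℓ) * fv)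
        = ∏ ℓ ∈ Finset.Icc 1 n, (fv * (y + φ (ξ ℓ))) := by
          refine Finset.prod_congr rfl fun ℓ _ => (hmul ℓ).symm
      _ = fv ^ n * ∏ ℓ ∈ Finset.Icc 1 n, (y + φ (ξ ℓ)) := by
          rw [Finset.prod_mul_distrib, Finset.prod_const, Nat.card_Icc]
          simp
      _ = fv ^ n * (y ^ n + φ t) := by rw [h1]
      _ = (fv * y) ^ n + φ t * fv ^ n := by rw [mul_pow]; ring
      _ = fu ^ n + φ t * fv ^ n := by rw [hy, mul_div_cancel₀ _ hfv0]
  rw [map_prod, map_add, map_mul, map_pow, map_pow]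
  have hφ' : ∀ c : ℂ, algebraMap S K (algebraMap ℂ S c) = φ c := fun c => rfl
  simp only [map_add, map_mul, hφ']
  exact h2

noncomputable def theta : MvPolynomial (Fin 2) ℂ →+* Polynomial ℂ :=
  (MvPolynomial.eval₂Hom (Polynomial.C : ℂ →+* Polynomial ℂ)
    (fun i : Fin 2 => if i = 0 then 1 else Polynomial.X))

lemma theta_X0 : theta (MvPolynomial.X 0) = 1 := by simp [theta]
lemma theta_X1 : theta (MvPolynomial.X 1) = Polynomial.X := by simp [theta]
lemma theta_C (c : ℂ) : theta (MvPolynomial.C c) = Polynomial.C c := by simp [theta]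

lemma t_eq_zero_of_eq {t : ℂ} {n : ℕ} {ξ : ℕ → ℂ} (hn : n = 0)
    (hξ : ∏ ℓ ∈ Finset.Icc 1 n, (Polynomial.X + Polynomial.C (ξ ℓ))
      = Polynomial.X ^ n + Polynomial.C t) : t = 0 := by
  subst hn
  simp only [show Finset.Icc 1 0 = (∅ : Finset ℕ) from rfl, Finset.prod_empty, pow_zero] at hξ
  have h2 : Polynomial.C t = 0 := by
    have := hξ.symm
    rwa [add_eq_left] at this
  exact_mod_cast Polynomial.C_eq_zero.mp h2

lemma monic_chain (r : ℕ) (a k : ℕ → ℕ) (E : ℕ → ℕ)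
    (ha : ∀ i, 1 ≤ i → i ≤ r → 2 ≤ a i)
    (hk : ∀ i, 1 ≤ i → i ≤ r → k i ≤ a i)
    (t : ℂ) (P : ℕ → MvPolynomial (Fin 2) ℂ)
    (hP0 : P 0 = 1) (hP1 : P 1 = MvPolynomial.X 1)
    (hPrec : ∀ i, 1 ≤ i → i ≤ r →
      P (i - 1) * P (i + 1) =
        P i ^ a i + MvPolynomial.C t * P i ^ k i * MvPolynomial.X 0 ^ ((a i - k i) * E i))
    (ξ : ℕ → ℕ → ℂ)
    (hξ : ∀ j, 1 ≤ j → j ≤ r →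
      ∏ ℓ ∈ Finset.Icc 1 (a j - k j), (Polynomial.X + Polynomial.C (ξ j ℓ)) =
        Polynomial.X ^ (a j - k j) + Polynomial.C t) :
    ∀ i, i ≤ r → (theta (P i)).Monic ∧ (theta (P (i+1))).Monic ∧
      (theta (P i)).natDegree < (theta (P (i+1))).natDegree := by
  intro i
  induction i using Nat.strong_induction_on with
  | _ i IH =>
    intro hir
    match i with
    | 0 =>
      refine ⟨?_, ?_, ?_⟩
      · rw [hP0, map_one]; exact Polynomial.monic_one
      · rw [hP1, theta_X1]; exact Polynomial.monic_X
      · rw [hP0, hP1, theta_X1, map_one]; simp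
    | (i+1) =>
      obtain ⟨hm0, hm1, hd1⟩ := IH i (by omega) (by omega)
      have hD1 : 1 ≤ (theta (P (i+1))).natDegree := by omega
      have hrec := congrArg theta (hPrec (i+1) (by omega) (by omega))
      rw [map_mul, map_add, map_mul, map_mul, map_pow, map_pow, map_pow, theta_X0,
        theta_C, one_pow, mul_one, show i + 1 - 1 = i from rfl] at hrec
      set p := theta (P (i+1)) with hp
      set q := theta (P i) with hq
      set p2 := theta (P (i+1+1)) with hp2
      have hdeglt : (Polynomial.C t * p ^ k (i+1)).degree < (p ^ a (i+1)).degree := by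
        rcases eq_or_ne t 0 with rfl | ht
        · rw [map_zero, zero_mul, Polynomial.degree_zero]
          exact bot_lt_iff_ne_bot.mpr
            (fun h => (hm1.pow (a (i+1))).ne_zero (Polynomial.degree_eq_bot.mp h))
        · have hlt : k (i+1) < a (i+1) := by
            rcases Nat.lt_or_ge (k (i+1)) (a (i+1)) with h | h
            · exact h
            · exact absurd (t_eq_zero_of_eq (by omega) (hξ (i+1) (by omega) (by omega))) ht
          calc (Polynomial.C t * p ^ k (i+1)).degree
              ≤ (p ^ k (i+1)).degree := by rw [Polynomial.degree_C_mul ht]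
            _ < (p ^ a (i+1)).degree := by
                apply Polynomial.degree_lt_degree
                rw [hm1.natDegree_pow, hm1.natDegree_pow]
                exact (Nat.mul_lt_mul_right (by omega)).mpr hlt
      have hmonicRHS : (p ^ a (i+1) + Polynomial.C t * p ^ k (i+1)).Monic :=
        Polynomial.Monic.add_of_left (hm1.pow _) hdeglt
      have hq0 : q ≠ 0 := hm0.ne_zero
      have hp2ne : p2 ≠ 0 := by
        intro h
        rw [h, mul_zero] at hrec
        exact hmonicRHS.ne_zero hrec.symm
      have hlc : q.leadingCoeff * p2.leadingCoeff = 1 := by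
        rw [← Polynomial.leadingCoeff_mul, hrec, hmonicRHS.leadingCoeff]
      have hm2 : p2.Monic := by
        have := hlc
        rw [hm0.leadingCoeff, one_mul] at this
        exact this
      have hndRHS : (p ^ a (i+1) + Polynomial.C t * p ^ k (i+1)).natDegree
          = a (i+1) * p.natDegree := by
        rw [Polynomial.natDegree_add_eq_left_of_degree_lt hdeglt, hm1.natDegree_pow]
      have hdeq : q.natDegree + p2.natDegree = a (i+1) * p.natDegree := by
        rw [← Polynomial.natDegree_mul hq0 hp2ne, hrec, hndRHS]
      have h2D : 2 * p.natDegree ≤ a (i+1) * p.natDegree :=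
        Nat.mul_le_mul_right _ (ha (i+1) (by omega) (by omega))
      exact ⟨hm1, hm2, by omega⟩


/-- the irreducible factorization of `P_{r+1}` (here over `ℂ[z_0,z_1]` with
`z_0 = X 0`, `z_1 = X 1`):
`P_{r+1} = ∏_{j=1}^{r} ∏_{ℓ=1}^{a_j-k_j} (P_j + ξ_{j,ℓ}·z_0^{Z_{j-2}(a_2,…,a_{j-1})})^{Z_{j-1}(k_1,…,k_{j-1})}`,
where `∏_ℓ (X + ξ_{j,ℓ}) = X^{a_j-k_j} + t`. -/
theorem P_succ_r_factorization (r : ℕ) (a k : ℕ → ℕ)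
    (ha : ∀ i, 1 ≤ i → i ≤ r → 2 ≤ a i)
    (hk : ∀ i, 1 ≤ i → i ≤ r → k i ≤ a i)
    (hadm : Admissible fun i : Fin r => k (i.1 + 1))
    (hk0 : Zc ((List.range' 1 r).map fun i => (k i : ℤ)) = 0)
    (t : ℂ) (P : ℕ → MvPolynomial (Fin 2) ℂ)
    (hP0 : P 0 = 1) (hP1 : P 1 = MvPolynomial.X 1)
    (hPrec : ∀ i, 1 ≤ i → i ≤ r →
      P (i - 1) * P (i + 1) =
        P i ^ a i + MvPolynomial.C t * P i ^ k i *
          MvPolynomial.X 0 ^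
            ((a i - k i) *
              (if i = 1 then 0
                else (Zc ((List.range' 2 (i - 2)).map fun j => (a j : ℤ))).toNat)))
    (ξ : ℕ → ℕ → ℂ)
    (hξ : ∀ j, 1 ≤ j → j ≤ r →
      ∏ ℓ ∈ Finset.Icc 1 (a j - k j), (Polynomial.X + Polynomial.C (ξ j ℓ)) =
        Polynomial.X ^ (a j - k j) + Polynomial.C t) :
    P (r + 1) =
      ∏ j ∈ Finset.Icc 1 r, ∏ ℓ ∈ Finset.Icc 1 (a j - k j),
        (P j + MvPolynomial.C (ξ j ℓ) *
            MvPolynomial.X 0 ^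
              (if j = 1 then 0
                else (Zc ((List.range' 2 (j - 2)).map fun i => (a i : ℤ))).toNat)) ^
          (Zc ((List.range' 1 (j - 1)).map fun i => (k i : ℤ))).toNat := by
  classical
  set g : ℕ → ℤ := (fun i => (k i : ℤ)) with hg
  rcases Nat.eq_zero_or_pos r with rfl | hr
  · exfalso
    simp only [List.range'] at hk0
    simp [Zc, Zrev] at hk0
  have hk0' : cc g 0 r = 0 := by
    unfold cc
    simpa using hk0
  have hnn : ∀ j i, j ≤ i → i ≤ r → 0 ≤ cc g j i := cc_nonneg r k hadm.1
  set E : ℕ → ℕ := fun j => if j = 1 then 0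
      else (Zc ((List.range' 2 (j - 2)).map fun i => (a i : ℤ))).toNat with hE
  set Q : ℕ → ℕ → MvPolynomial (Fin 2) ℂ :=
    fun j ℓ => P j + MvPolynomial.C (ξ j ℓ) * MvPolynomial.X 0 ^ E j with hQ
  set W : ℕ → MvPolynomial (Fin 2) ℂ :=
    fun j => ∏ ℓ ∈ Finset.Icc 1 (a j - k j), Q j ℓ with hW
  set F : ℕ → MvPolynomial (Fin 2) ℂ :=
    fun i => MvPolynomial.X 1 ^ (cc g 0 i).toNat *
      ∏ j ∈ Finset.Icc 1 i, W j ^ (cc g j i).toNat with hF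
  have hPrecE : ∀ i, 1 ≤ i → i ≤ r →
      P (i - 1) * P (i + 1) =
        P i ^ a i + MvPolynomial.C t * P i ^ k i *
          MvPolynomial.X 0 ^ ((a i - k i) * E i) := hPrec
  have hchain := monic_chain r a k E ha hk t P hP0 hP1 hPrecE ξ hξ
  have hPne : ∀ m, m ≤ r → P m ≠ 0 := by
    intro m hm h0
    have := (hchain m hm).1
    rw [h0, map_zero] at this
    exact this.ne_zero rfl
  have hkey : ∀ i, 1 ≤ i → i ≤ r →
      P (i-1) * P (i+1) = P i ^ k i * W i := by
    intro i h1 h2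
    have hxi := xi_prod t (a i - k i) (ξ i) (hξ i h1 h2) (P i)
      (MvPolynomial.X 0 ^ E i) (pow_ne_zero _ (MvPolynomial.X_ne_zero 0))
    simp only [MvPolynomial.algebraMap_eq] at hxi
    have hxi' : W i = P i ^ (a i - k i) +
        MvPolynomial.C t * (MvPolynomial.X 0 ^ E i) ^ (a i - k i) := hxi
    rw [hPrecE i h1 h2, hxi', mul_add, ← pow_add,
      show k i + (a i - k i) = a i from by have := hk i h1 h2; omega,
      ← pow_mul, show E i * (a i - k i) = (a i - k i) * E i from mul_comm _ _]
    ring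
  have hexp : ∀ j i, j + 2 ≤ i → i ≤ r →
      (cc g j i).toNat + (cc g j (i-2)).toNat = (cc g j (i-1)).toNat * k i := by
    intro j i hji hir
    have e1 := cc_rec_back g j i hji
    have n1 := hnn j i (by omega) hir
    have n2 := hnn j (i-1) (by omega) (by omega)
    have n3 := hnn j (i-2) (by omega) (by omega)
    have hZ : ((cc g j i).toNat + (cc g j (i-2)).toNat : ℤ)
        = ((cc g j (i-1)).toNat * k i : ℤ) := by
      push_cast [Int.toNat_of_nonneg n1, Int.toNat_of_nonneg n2, Int.toNat_of_nonneg n3]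
      have hgi : g i = (k i : ℤ) := rfl
      rw [← hgi]
      linarith
    exact_mod_cast hZ
  have hmain : ∀ i, i ≤ r → P (i+1) = F i := by
    intro i
    induction i using Nat.strong_induction_on with
    | _ i IH =>
      intro hir
      match i with
      | 0 =>
        rw [hP1, hF]
        simp [cc_self]
      | 1 =>
        have hk1 := hkey 1 le_rfl (by omega)
        rw [show (1:ℕ)-1 = 0 from rfl, hP0, one_mul, hP1] at hk1
        rw [hk1]
        simp only [hF]
        rw [Finset.Icc_self, Finset.prod_singleton]
        rw [show cc g 0 1 = g 1 from cc_succ_self g 0,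
          show cc g 1 1 = 1 from cc_self g 1]
        rw [show (g 1).toNat = k 1 from Int.toNat_natCast (k 1)]
        simp
      | (m+2) =>
        have hkeyi := hkey (m+2) (by omega) (by omega)
        have hFm2 := IH m (by omega) (by omega)
        have hFm1 := IH (m+1) (by omega) (by omega)
        rw [show m+2-1 = m+1 from rfl] at hkeyi
        rw [hFm2, hFm1] at hkeyi
        have hsplit : ∀ (n : ℕ) (γ : ℕ → ℤ),
            ∏ j ∈ Finset.Icc 1 (n+1), W j ^ (γ j).toNat
              = (∏ j ∈ Finset.Icc 1 n, W j ^ (γ j).toNat) * W (n+1) ^ (γ (n+1)).toNat :=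
          fun n γ => Finset.prod_Icc_succ_top (by omega) _
        have hcomb : F m * F (m+2) = F (m+1) ^ k (m+2) * W (m+2) := by
          simp only [hF]
          rw [show m+2 = (m+1)+1 from rfl, hsplit (m+1) (fun j => cc g j (m+2)),
            hsplit m (fun j => cc g j (m+2)), hsplit m (fun j => cc g j (m+1))]
          rw [show cc g (m+2) (m+2) = 1 from cc_self g (m+2),
            show cc g (m+1) (m+2) = g (m+2) from cc_succ_self g (m+1),
            show cc g (m+1) (m+1) = 1 from cc_self g (m+1)]
          rw [show (1:ℤ).toNat = 1 from rfl, pow_one, pow_one,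
            show (g (m+2)).toNat = k (m+2) from Int.toNat_natCast (k (m+2))]
          have e1 : MvPolynomial.X (R := ℂ) (1 : Fin 2) ^ (cc g 0 m).toNat *
              MvPolynomial.X 1 ^ (cc g 0 (m+2)).toNat
              = (MvPolynomial.X 1 ^ (cc g 0 (m+1)).toNat) ^ k (m+2) := by
            rw [← pow_add, ← pow_mul]
            congr 1
            have h := hexp 0 (m+2) (by omega) (by omega)
            simp only [show m+2-2 = m from rfl, show m+2-1 = m+1 from rfl] at h
            omega
          have e2 : (∏ j ∈ Finset.Icc 1 m, W j ^ (cc g j m).toNat) *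
              (∏ j ∈ Finset.Icc 1 m, W j ^ (cc g j (m+2)).toNat)
              = (∏ j ∈ Finset.Icc 1 m, W j ^ (cc g j (m+1)).toNat) ^ k (m+2) := by
            rw [← Finset.prod_mul_distrib, ← Finset.prod_pow]
            refine Finset.prod_congr rfl fun j hj => ?_
            rw [← pow_add, ← pow_mul]
            congr 1
            have hjm : 1 ≤ j ∧ j ≤ m := by simpa using hj
            have h := hexp j (m+2) (by omega) (by omega)
            simp only [show m+2-2 = m from rfl, show m+2-1 = m+1 from rfl] at h
            omega
          calc MvPolynomial.X 1 ^ (cc g 0 m).toNat *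
                (∏ j ∈ Finset.Icc 1 m, W j ^ (cc g j m).toNat) *
                (MvPolynomial.X 1 ^ (cc g 0 (m+2)).toNat *
                  ((∏ j ∈ Finset.Icc 1 m, W j ^ (cc g j (m+2)).toNat) *
                    W (m+1) ^ k (m+2) * W (m+2)))
              = (MvPolynomial.X 1 ^ (cc g 0 m).toNat *
                  MvPolynomial.X 1 ^ (cc g 0 (m+2)).toNat) *
                ((∏ j ∈ Finset.Icc 1 m, W j ^ (cc g j m).toNat) *
                  (∏ j ∈ Finset.Icc 1 m, W j ^ (cc g j (m+2)).toNat)) *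
                W (m+1) ^ k (m+2) * W (m+2) := by ring
            _ = (MvPolynomial.X 1 ^ (cc g 0 (m+1)).toNat) ^ k (m+2) *
                ((∏ j ∈ Finset.Icc 1 m, W j ^ (cc g j (m+1)).toNat) ^ k (m+2)) *
                W (m+1) ^ k (m+2) * W (m+2) := by rw [e1, e2]
            _ = (MvPolynomial.X 1 ^ (cc g 0 (m+1)).toNat *
                ((∏ j ∈ Finset.Icc 1 m, W j ^ (cc g j (m+1)).toNat) * W (m+1))) ^ k (m+2)
                * W (m+2) := by rw [mul_pow, mul_pow]; ring
        have hFmne : F m ≠ 0 := by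
          rw [← hFm2]
          exact hPne (m+1) (by omega)
        apply mul_left_cancel₀ hFmne
        rw [show m+2+1 = (m+2)+1 from rfl] at hkeyi
        rw [hkeyi, hcomb]
  have hfin := hmain r (le_refl r)
  rw [hfin]
  simp only [hF]
  rw [hk0']
  simp only [Int.toNat_zero, pow_zero, one_mul]
  refine Finset.prod_congr rfl fun j hj => ?_
  have hj1 : 1 ≤ j ∧ j ≤ r := by simpa using hj
  simp only [hW]
  rw [← Finset.prod_pow]
  refine Finset.prod_congr rfl fun ℓ _ => ?_
  congr 1
  rw [cc_end g r hr hk0' hnn j hj1.1 hj1.2]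
  unfold cc
  simp
end
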